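/- Let E be a real Banach space, let K ≥ 0, and let f : ℝ → E → E be such that for every t ∈ [t₀, t_m] the map x ↦ f(t, x) is K-Lipschitz. Let Φ, Ψ : E → E and suppose: (i) for every x ∈ E there is a solution h_x on [t₀, t_m] of the ODE x' = f(t, x) with h_x(t₀) = x and h_x(t_m) = Φ(x); and (ii) for every y ∈ E there is a solution g_y on [t₀, t_m] of the same ODE with g_y(t_m) = y and g_y(t₀) = Ψ(y). Then Φ is a homeomorphism of E onto E: Φ is bijective with inverse Ψ, Φ is Lipschitz with constant exp(K·(t_m − t₀)), and Ψ is Lipschitz with constant exp(K·(t_m − t₀)); in particular both Φ and its inverse are continuous. (Proposition 1's premise in full: the mapping φ_t from t₀ to t_m created by a neural ODE is a homeomorphic mapping, so the topology of its input space is preserved in its output space.) -/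

import Mathlib

/-- `h` is a solution of the ODE `x' = f(t, x)` on the interval `[t₀, tm]`:
`h` is continuous on `[t₀, tm]` and has derivative `f(t, h(t))` within
`[t₀, tm]` at every `t ∈ [t₀, tm]` (one-sided derivatives at the endpoints). -/
def IsODESolutionOn {E : Type*} [NormedAddCommGroup E] [NormedSpace ℝ E]
    (f : ℝ → E → E) (h : ℝ → E) (t₀ tm : ℝ) : Prop :=
  ContinuousOn h (Set.Icc t₀ tm) ∧
    ∀ t ∈ Set.Icc t₀ tm, HasDerivWithinAt h (f t (h t)) (Set.Icc t₀ tm) t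

open Set Real in
lemma forward_est {E : Type*} [NormedAddCommGroup E] [NormedSpace ℝ E]
    {t₀ tm : ℝ} (ht : t₀ ≤ tm) {K : ℝ} (hK : 0 ≤ K)
    {f : ℝ → E → E} (hf : ∀ t ∈ Set.Icc t₀ tm, LipschitzWith ⟨K, hK⟩ (f t))
    {h g : ℝ → E} (hh : IsODESolutionOn f h t₀ tm) (hg : IsODESolutionOn f g t₀ tm) :
    dist (h tm) (g tm) ≤ dist (h t₀) (g t₀) * Real.exp (K * (tm - t₀)) := by
  set v : ℝ → E → E := fun t => f (max t₀ (min t tm)) with hv_def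
  have hv : ∀ t, LipschitzWith ⟨K, hK⟩ (v t) := fun t =>
    hf _ ⟨le_max_left _ _, max_le ht (min_le_right _ _)⟩
  have key : ∀ (u : ℝ → E), IsODESolutionOn f u t₀ tm →
      ∀ t ∈ Set.Ico t₀ tm, HasDerivWithinAt u (v t (u t)) (Set.Ici t) t := by
    intro u hu t htI
    have hvt : v t = f t := by
      simp only [hv_def]
      rw [min_eq_left htI.2.le, max_eq_right htI.1]
    rw [hvt]
    exact (hu.2 t ⟨htI.1, htI.2.le⟩).mono_of_mem_nhdsWithin (Icc_mem_nhdsGE_of_mem htI)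
  exact dist_le_of_trajectories_ODE hv hh.1 (key h hh) hg.1 (key g hg) le_rfl tm ⟨ht, le_rfl⟩

open Set Real in
lemma backward_est {E : Type*} [NormedAddCommGroup E] [NormedSpace ℝ E]
    {t₀ tm : ℝ} (ht : t₀ ≤ tm) {K : ℝ} (hK : 0 ≤ K)
    {f : ℝ → E → E} (hf : ∀ t ∈ Set.Icc t₀ tm, LipschitzWith ⟨K, hK⟩ (f t))
    {h g : ℝ → E} (hh : IsODESolutionOn f h t₀ tm) (hg : IsODESolutionOn f g t₀ tm) :
    dist (h t₀) (g t₀) ≤ dist (h tm) (g tm) * Real.exp (K * (tm - t₀)) := by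
  -- time-reverse: H t := h (-t) solves x' = F t x := -(f (-t) x) on [-tm, -t₀]
  set F : ℝ → E → E := fun t x => -(f (-t) x) with hF_def
  have hF : ∀ t ∈ Set.Icc (-tm) (-t₀), LipschitzWith ⟨K, hK⟩ (F t) := by
    intro t htI
    have : LipschitzWith ⟨K, hK⟩ (f (-t)) :=
      hf _ ⟨le_neg.mp htI.2, neg_le.mp htI.1⟩
    have h2 := (LipschitzWith.id.neg.comp this :
      LipschitzWith (1 * ⟨K, hK⟩) (Neg.neg ∘ f (-t)))
    replace h2 : LipschitzWith ⟨K, hK⟩ ((-id) ∘ f (-t)) := h2.weaken (le_of_eq (one_mul _))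
    simpa [hF_def, one_mul, Function.comp_def] using h2
  have key : ∀ (u : ℝ → E), IsODESolutionOn f u t₀ tm →
      IsODESolutionOn F (fun t => u (-t)) (-tm) (-t₀) := by
    intro u hu
    have hmt : MapsTo Neg.neg (Icc (-tm) (-t₀)) (Icc t₀ tm) :=
      fun _ ht' => ⟨le_neg.mp ht'.2, neg_le.mp ht'.1⟩
    refine ⟨hu.1.comp continuousOn_neg hmt, fun t htI => ?_⟩
    have h1 := (hu.2 (-t) (hmt htI)).scomp t ((hasDerivAt_neg t).hasDerivWithinAt)
      (fun s hs => hmt hs)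
    simpa [hF_def, Function.comp_def] using h1
  have := forward_est (neg_le_neg ht) hK hF (key h hh) (key g hg)
  simpa [neg_neg, show -t₀ - -tm = tm - t₀ by ring] using this

/-- Proposition 1's premise in full (OCT-GAN): the flow map `Φ` of a neural
ODE with `K`-Lipschitz vector field is a homeomorphism of `E`: it is bijective
with inverse `Ψ`, both `Φ` and `Ψ` are Lipschitz with constant
`exp(K·(tm − t₀))`, and in particular both are continuous. -/
theorem ode_flow_map_homeomorphic
    {E : Type*} [NormedAddCommGroup E] [NormedSpace ℝ E] [CompleteSpace E]
    (t₀ tm : ℝ) (ht : t₀ ≤ tm) (K : ℝ) (hK : 0 ≤ K)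
    (f : ℝ → E → E) (hf : ∀ t ∈ Set.Icc t₀ tm, LipschitzWith ⟨K, hK⟩ (f t))
    (Φ Ψ : E → E)
    (hΦ : ∀ x : E, ∃ h : ℝ → E,
      IsODESolutionOn f h t₀ tm ∧ h t₀ = x ∧ h tm = Φ x)
    (hΨ : ∀ y : E, ∃ g : ℝ → E,
      IsODESolutionOn f g t₀ tm ∧ g tm = y ∧ g t₀ = Ψ y) :
    Function.Bijective Φ ∧ (∀ x : E, Ψ (Φ x) = x) ∧ (∀ y : E, Φ (Ψ y) = y) ∧
      LipschitzWith ⟨Real.exp (K * (tm - t₀)), Real.exp_nonneg _⟩ Φ ∧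
      LipschitzWith ⟨Real.exp (K * (tm - t₀)), Real.exp_nonneg _⟩ Ψ ∧
      Continuous Φ ∧ Continuous Ψ := by
  have hΨΦ : ∀ x : E, Ψ (Φ x) = x := by
    intro x
    obtain ⟨h, hh, hh0, hhm⟩ := hΦ x
    obtain ⟨g, hg, hgm, hg0⟩ := hΨ (Φ x)
    have := backward_est ht hK hf hh hg
    rw [hhm, hgm, dist_self, zero_mul] at this
    have := dist_le_zero.mp this
    rw [hh0, hg0] at this
    exact this.symm
  have hΦΨ : ∀ y : E, Φ (Ψ y) = y := by
    intro y
    obtain ⟨g, hg, hgm, hg0⟩ := hΨ y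
    obtain ⟨h, hh, hh0, hhm⟩ := hΦ (Ψ y)
    have := forward_est ht hK hf hh hg
    rw [hh0, hg0, dist_self, zero_mul] at this
    have := dist_le_zero.mp this
    rw [hhm, hgm] at this
    exact this
  have hΦlip : LipschitzWith ⟨Real.exp (K * (tm - t₀)), Real.exp_nonneg _⟩ Φ := by
    apply LipschitzWith.of_dist_le_mul
    intro x y
    obtain ⟨h, hh, hh0, hhm⟩ := hΦ x
    obtain ⟨g, hg, hg0, hgm⟩ := hΦ y
    have := forward_est ht hK hf hh hg
    rw [hhm, hgm, hh0, hg0] at this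
    calc dist (Φ x) (Φ y) ≤ dist x y * Real.exp (K * (tm - t₀)) := this
      _ = _ := mul_comm _ _
  have hΨlip : LipschitzWith ⟨Real.exp (K * (tm - t₀)), Real.exp_nonneg _⟩ Ψ := by
    apply LipschitzWith.of_dist_le_mul
    intro x y
    obtain ⟨h, hh, hhm, hh0⟩ := hΨ x
    obtain ⟨g, hg, hgm, hg0⟩ := hΨ y
    have := backward_est ht hK hf hh hg
    rw [hhm, hgm, hh0, hg0] at this
    calc dist (Ψ x) (Ψ y) ≤ dist x y * Real.exp (K * (tm - t₀)) := this
      _ = _ := mul_comm _ _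
  exact ⟨Function.bijective_iff_has_inverse.mpr ⟨Ψ, hΨΦ, hΦΨ⟩, hΨΦ, hΦΨ, hΦlip, hΨlip,
    hΦlip.continuous, hΨlip.continuous⟩
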